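/- Let T>0, G>0, m>0 be constants and F a nonnegative continuous function on [0,T). Define ν₀ = 1/(4m(2mTG)^{1/m} ∫₀^T F(t)dt). Then for all 0<ν≤ν₀, every nonnegative C¹ function y on [0,T) with y(0)=0 and y'(t) ≤ νF(t) + G·y(t)^{1+m} satisfies y(t) ≤ min{ (4^{1/m}−1)/(2mTG)^{1/m}, 4m(4^{1/m}−1)ν∫₀^T F(t)dt } for all t∈[0,T). -/

import Mathlib

open MeasureTheory Set intervalIntegral Topology

/-- ODE comparison lemma (Proposition 2.6): if `y' ≤ ν F + G y^{1+m}` with `y(0)=0`,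
`0 < ν ≤ ν₀ = 1/(4m(2mTG)^{1/m} ∫₀^T F)`, then `y` is bounded by the stated minimum. -/
theorem statement0 (T G m ν : ℝ) (hT : 0 < T) (hG : 0 < G) (hm : 0 < m)
    (F : ℝ → ℝ) (hFcont : ContinuousOn F (Ico 0 T))
    (hFnonneg : ∀ t ∈ Ico 0 T, 0 ≤ F t)
    (hFpos : 0 < ∫ t in (0:ℝ)..T, F t)
    (hν : 0 < ν)
    (hνle : ν ≤ 1 / (4 * m * (2 * m * T * G) ^ (1/m) * ∫ t in (0:ℝ)..T, F t))
    (y y' : ℝ → ℝ)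
    (hynonneg : ∀ t ∈ Ico 0 T, 0 ≤ y t) (hy0 : y 0 = 0)
    (hyderiv : ∀ t ∈ Ico 0 T, HasDerivWithinAt y (y' t) (Ico 0 T) t)
    (hineq : ∀ t ∈ Ico 0 T, y' t ≤ ν * F t + G * y t ^ (1 + m)) :
    ∀ t ∈ Ico 0 T,
      y t ≤ min (((4:ℝ) ^ (1/m) - 1) / (2 * m * T * G) ^ (1/m))
        (4 * m * ((4:ℝ) ^ (1/m) - 1) * ν * ∫ t in (0:ℝ)..T, F t) := by
  intro t₀ ht₀mem
  obtain ⟨ht₀0, ht₀T⟩ := ht₀mem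
  set A := ∫ t in (0:ℝ)..T, F t with hA
  have hFint : IntervalIntegrable F volume 0 T := by
    by_contra h
    rw [hA, intervalIntegral.integral_undef h] at hFpos
    exact lt_irrefl 0 hFpos
  have hApos : 0 < A := hFpos
  set K := (2 * m * T * G) ^ (1/m) with hK
  have h2mTG : (0:ℝ) < 2 * m * T * G := by positivity
  have hKpos : 0 < K := Real.rpow_pos_of_pos h2mTG _
  set δ := 4 * m * ν * A with hδ
  have hδpos : 0 < δ := by positivity
  -- δ * K ≤ 1
  have hδK : δ * K ≤ 1 := by
    rw [le_div_iff₀ (by positivity)] at hνle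
    nlinarith
  have hδle : δ ≤ K⁻¹ := by
    have h := mul_le_mul_of_nonneg_right hδK (inv_nonneg.mpr hKpos.le)
    rwa [mul_assoc, mul_inv_cancel₀ hKpos.ne', mul_one, one_mul] at h
  -- K ^ m = 2 m T G
  have hKm : K ^ m = 2 * m * T * G := by
    rw [hK, ← Real.rpow_mul h2mTG.le, one_div, inv_mul_cancel₀ hm.ne', Real.rpow_one]
  have hδmle : δ ^ m ≤ (2 * m * T * G)⁻¹ := by
    have h1 : δ ^ m ≤ (K⁻¹) ^ m := Real.rpow_le_rpow hδpos.le hδle hm.le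
    rwa [Real.inv_rpow hKpos.le, hKm] at h1
  have hδmpos : 0 < δ ^ m := Real.rpow_pos_of_pos hδpos m
  have h2mTGle : 2 * m * T * G ≤ δ ^ (-m) := by
    have h1 : 2 * m * T * G * δ ^ m ≤ 1 := by
      have := mul_le_mul_of_nonneg_left hδmle h2mTG.le
      rwa [mul_inv_cancel₀ h2mTG.ne'] at this
    have h2 := mul_le_mul_of_nonneg_right h1 (inv_nonneg.mpr hδmpos.le)
    rw [mul_assoc, mul_inv_cancel₀ hδmpos.ne', mul_one, one_mul] at h2
    rwa [Real.rpow_neg hδpos.le]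
  have hsub : Icc (0:ℝ) t₀ ⊆ Ico 0 T := fun u hu => ⟨hu.1, lt_of_le_of_lt hu.2 ht₀T⟩
  -- the auxiliary function H
  set H : ℝ → ℝ := fun u =>
    (δ + y u) ^ (-m) + m * ν * δ ^ (-m - 1) * (∫ s in (0:ℝ)..u, F s) + m * G * u with hH
  have key : ∀ x ∈ Ioo (0:ℝ) t₀,
      HasDerivAt H
        (y' x * (-m) * (δ + y x) ^ (-m - 1) + m * ν * δ ^ (-m - 1) * F x + m * G) x := by
    intro x hx
    have hxT : x < T := hx.2.trans ht₀T
    have hxI : x ∈ Ico (0:ℝ) T := ⟨hx.1.le, hxT⟩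
    have hmemn : Ico (0:ℝ) T ∈ 𝓝 x := Ico_mem_nhds hx.1 hxT
    have hyx : HasDerivAt y (y' x) x := (hyderiv x hxI).hasDerivAt hmemn
    have hbpos : 0 < δ + y x := by have := hynonneg x hxI; linarith
    have hψ : HasDerivAt (fun u => (δ + y u) ^ (-m))
        (y' x * (-m) * (δ + y x) ^ (-m - 1)) x :=
      (hyx.const_add δ).rpow_const (Or.inl hbpos.ne')
    have hFint0x : IntervalIntegrable F volume 0 x :=
      hFint.mono_set (by
        rw [uIcc_of_le hx.1.le, uIcc_of_le hT.le]
        exact Icc_subset_Icc le_rfl hxT.le)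
    have hFca : ContinuousAt F x := hFcont.continuousAt hmemn
    have hFm : StronglyMeasurableAtFilter F (𝓝 x) volume :=
      (hFcont.mono Ioo_subset_Ico_self).stronglyMeasurableAtFilter isOpen_Ioo x
        ⟨hx.1, hxT⟩
    have hIx : HasDerivAt (fun u => ∫ s in (0:ℝ)..u, F s) (F x) x :=
      intervalIntegral.integral_hasDerivAt_right hFint0x hFm hFca
    have hlin : HasDerivAt (fun u : ℝ => m * G * u) (m * G) x := by
      simpa using (hasDerivAt_id x).const_mul (m * G)
    exact (hψ.add (hIx.const_mul (m * ν * δ ^ (-m - 1)))).add hlin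
  -- H is monotone on [0, t₀]
  have hmono : MonotoneOn H (Icc 0 t₀) := by
    apply monotoneOn_of_deriv_nonneg (convex_Icc 0 t₀)
    · -- continuity
      have hycont : ContinuousOn y (Icc 0 t₀) := fun u hu =>
        ((hyderiv u (hsub hu)).continuousWithinAt).mono hsub
      have hψcont : ContinuousOn (fun u => (δ + y u) ^ (-m)) (Icc 0 t₀) := by
        apply (continuousOn_const.add hycont).rpow_const
        intro u hu
        have := hynonneg u (hsub hu)
        exact Or.inl (ne_of_gt (by show 0 < δ + y u; linarith))
      have hIcont : ContinuousOn (fun u => ∫ s in (0:ℝ)..u, F s) (Icc 0 t₀) := by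
        have h1 : IntegrableOn F (Icc 0 t₀) volume :=
          (hFcont.mono hsub).integrableOn_Icc
        have h2 := intervalIntegral.continuousOn_primitive_interval
          (f := F) (μ := volume) (a := 0) (b := t₀) (by rwa [uIcc_of_le ht₀0])
        rwa [uIcc_of_le ht₀0] at h2
      exact (hψcont.add (continuousOn_const.mul hIcont)).add
        (continuousOn_const.mul continuousOn_id)
    · intro x hx
      rw [interior_Icc] at hx
      exact (key x hx).differentiableAt.differentiableWithinAt
    · intro x hx
      rw [interior_Icc] at hx
      rw [(key x hx).deriv]
      -- show the derivative is nonnegative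
      have hxI : x ∈ Ico (0:ℝ) T := ⟨hx.1.le, hx.2.trans ht₀T⟩
      have hyxpos := hynonneg x hxI
      have hbpos : 0 < δ + y x := by linarith
      have h1 : (δ + y x) ^ (1 + m) * (δ + y x) ^ (-m - 1) = 1 := by
        rw [← Real.rpow_add hbpos, show 1 + m + (-m - 1) = (0:ℝ) by ring, Real.rpow_zero]
      have h2 : (δ + y x) ^ (-m - 1) ≤ δ ^ (-m - 1) :=
        Real.rpow_le_rpow_of_nonpos hδpos (by linarith) (by linarith)
      have h3 : 0 < (δ + y x) ^ (-m - 1) := Real.rpow_pos_of_pos hbpos _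
      have h4 : y x ^ (1 + m) ≤ (δ + y x) ^ (1 + m) :=
        Real.rpow_le_rpow hyxpos (by linarith) (by linarith)
      have h5 := hineq x hxI
      have h6 := hFnonneg x hxI
      have h7 : y' x ≤ ν * F x + G * (δ + y x) ^ (1 + m) := by
        nlinarith [mul_le_mul_of_nonneg_left h4 hG.le]
      have h8 : m * (δ + y x) ^ (-m - 1) * y' x ≤
          m * (δ + y x) ^ (-m - 1) * (ν * F x + G * (δ + y x) ^ (1 + m)) :=
        mul_le_mul_of_nonneg_left h7 (by positivity)
      have h9 : m * (δ + y x) ^ (-m - 1) * (ν * F x + G * (δ + y x) ^ (1 + m)) =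
          m * ν * F x * (δ + y x) ^ (-m - 1) + m * G := by
        linear_combination (m * G) * h1
      have h10 : m * ν * F x * (δ + y x) ^ (-m - 1) ≤ m * ν * F x * δ ^ (-m - 1) :=
        mul_le_mul_of_nonneg_left h2 (mul_nonneg (by positivity) h6)
      nlinarith [h8, h9, h10]
  -- evaluate monotonicity between 0 and t₀
  have hH0 : H 0 ≤ H t₀ := hmono ⟨le_rfl, ht₀0⟩ ⟨ht₀0, le_rfl⟩ ht₀0
  have hH0eq : H 0 = δ ^ (-m) := by
    simp [hH, hy0, intervalIntegral.integral_same]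
  rw [hH0eq, hH] at hH0
  simp only at hH0
  -- bound the integral term
  have haeF : 0 ≤ᵐ[volume.restrict (Ioc 0 T)] F := by
    have h1 : ∀ᵐ s ∂(volume.restrict (Ioc (0:ℝ) T)), s ∈ Ioc (0:ℝ) T :=
      ae_restrict_mem measurableSet_Ioc
    have h2 : ∀ᵐ (s : ℝ) ∂(volume.restrict (Ioc (0:ℝ) T)), s ≠ T := by
      refine ae_restrict_of_ae ?_
      rw [ae_iff]
      convert measure_singleton (μ := volume) T using 2
      ext s; simp
    filter_upwards [h1, h2] with s hs hsne
    exact hFnonneg s ⟨hs.1.le, lt_of_le_of_ne hs.2 hsne⟩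
  have hIle : (∫ s in (0:ℝ)..t₀, F s) ≤ A :=
    intervalIntegral.integral_mono_interval le_rfl ht₀0 ht₀T.le haeF hFint
  have e1 : m * ν * δ ^ (-m - 1) * (∫ s in (0:ℝ)..t₀, F s) ≤ m * ν * δ ^ (-m - 1) * A :=
    mul_le_mul_of_nonneg_left hIle (by positivity)
  have e2 : m * G * t₀ ≤ m * G * T := mul_le_mul_of_nonneg_left ht₀T.le (by positivity)
  have e3 : m * ν * δ ^ (-m - 1) * A = (1/4) * δ ^ (-m) := by
    have hrel : δ * δ ^ (-m - 1) = δ ^ (-m) := by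
      nth_rewrite 1 [← Real.rpow_one δ]
      rw [← Real.rpow_add hδpos]
      norm_num
    linear_combination (1/4 : ℝ) * hrel - (δ ^ (-m - 1) / 4) * hδ
  have e4 : m * G * T ≤ (1/2) * δ ^ (-m) := by linarith
  have hfin : (1/4) * δ ^ (-m) ≤ (δ + y t₀) ^ (-m) := by linarith
  -- convert back to a bound on y t₀
  have ht₀I : t₀ ∈ Ico (0:ℝ) T := ⟨ht₀0, ht₀T⟩
  have hyt₀ := hynonneg t₀ ht₀I
  have hbpos : 0 < δ + y t₀ := by linarith
  have h4pos : (0:ℝ) < (4:ℝ) ^ (1/m) := Real.rpow_pos_of_pos (by norm_num) _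
  have hQpos : 0 < (4:ℝ) ^ (1/m) * δ := by positivity
  have hq : ((4:ℝ) ^ (1/m) * δ) ^ (-m) = (1/4) * δ ^ (-m) := by
    rw [Real.mul_rpow h4pos.le hδpos.le, ← Real.rpow_mul (by norm_num : (0:ℝ) ≤ 4),
      show 1 / m * (-m) = (-1:ℝ) by field_simp, Real.rpow_neg_one]
    norm_num
  have hle2 : ((4:ℝ) ^ (1/m) * δ) ^ (-m) ≤ (δ + y t₀) ^ (-m) := by rw [hq]; exact hfin
  have hmain : δ + y t₀ ≤ (4:ℝ) ^ (1/m) * δ :=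
    (Real.rpow_le_rpow_iff_of_neg hQpos hbpos (by linarith)).mp hle2
  have hybound : y t₀ ≤ ((4:ℝ) ^ (1/m) - 1) * δ := by linarith
  have h41 : 1 ≤ (4:ℝ) ^ (1/m) := by
    have := Real.rpow_le_rpow_of_exponent_le (by norm_num : (1:ℝ) ≤ 4)
      (by positivity : (0:ℝ) ≤ 1/m)
    rwa [Real.rpow_zero] at this
  refine le_trans hybound (le_min ?_ ?_)
  · have h1 : ((4:ℝ) ^ (1/m) - 1) * δ ≤ ((4:ℝ) ^ (1/m) - 1) * K⁻¹ :=
      mul_le_mul_of_nonneg_left hδle (by linarith)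
    rwa [← div_eq_mul_inv] at h1
  · exact le_of_eq (by rw [hδ]; ring)
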